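/- Approximation time near z for the perturbed multilayer dynamics: assume z ≥ 0, let t₀ ≥ 0, suppose |h(t)| ≤ κ for all t ≥ t₀ for some κ > 0, and suppose z/4 ≤ θ(t₀) ≤ 3z. Then for any δ > 0, |z − θ(t)| ≤ κ + δ for all t ≥ t₀ + 4^{(2D+2)/(D+2)} · D^{D/(D+2)} · z^{−(2D+2)/(D+2)} · ln⁺((|z − θ(t₀)| − κ)/δ). -/

import Mathlib

set_option maxHeartbeats 4000000

open Real Set

private lemma barrier_aux {f : ℝ → ℝ} (f' : ℝ → ℝ) {t₀ T M κ r ε : ℝ}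
    (hf : ContinuousOn f (Icc t₀ T))
    (hf' : ∀ x ∈ Ico t₀ T, HasDerivWithinAt f (f' x) (Ici x) x)
    (h0 : f t₀ ≤ M + ε)
    (bound : ∀ x ∈ Ico t₀ T,
      f x = (M - κ) * Real.exp (-(r * (x - t₀))) + (κ + ε) →
      f' x < (M - κ) * (-r * Real.exp (-(r * (x - t₀)))))
    (hT : t₀ ≤ T) :
    f T ≤ (M - κ) * Real.exp (-(r * (T - t₀))) + (κ + ε) := by
  have hB : ∀ x : ℝ, HasDerivAt (fun y => (M - κ) * Real.exp (-(r * (y - t₀))) + (κ + ε))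
      ((M - κ) * (-r * Real.exp (-(r * (x - t₀))))) x := by
    intro x
    have h1 : HasDerivAt (fun y : ℝ => -(r * (y - t₀))) (-r) x := by
      exact (((hasDerivAt_id x).sub_const t₀).const_mul r).neg.congr_deriv (by ring)
    have h2 := (h1.exp.const_mul (M - κ)).add_const (κ + ε)
    refine h2.congr_deriv ?_
    ring
  have h0' : f t₀ ≤ (M - κ) * Real.exp (-(r * (t₀ - t₀))) + (κ + ε) := by
    simp only [sub_self, mul_zero, neg_zero, Real.exp_zero, mul_one]
    linarith
  exact image_le_of_deriv_right_lt_deriv_boundary hf hf' h0' hB bound ⟨hT, le_rfl⟩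

/-- Approximation time near z for the perturbed multilayer dynamics. -/
theorem stmt_15 (D : ℕ) (lam b0 z κ t₀ : ℝ) (h a b β : ℝ → ℝ)
    (hD : 1 ≤ D) (hlam : 0 < lam) (hb0pos : 0 < b0)
    (hh : ContinuousOn h (Ici 0))
    (ha0 : a 0 = Real.sqrt lam) (hbinit : b 0 = b0) (hβ0 : β 0 = 0)
    (hode : ∀ t ∈ Ici (0 : ℝ),
      HasDerivWithinAt a
        (b t ^ D * β t * (z - a t * b t ^ D * β t + h t)) (Ici 0) t ∧
      HasDerivWithinAt b
        ((D : ℝ) * a t * b t ^ (D - 1) * β t * (z - a t * b t ^ D * β t + h t)) (Ici 0) t ∧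
      HasDerivWithinAt β
        (a t * b t ^ D * (z - a t * b t ^ D * β t + h t)) (Ici 0) t)
    (hz : 0 ≤ z) (ht₀ : 0 ≤ t₀) (hκ : 0 < κ)
    (hhb : ∀ t, t₀ ≤ t → |h t| ≤ κ)
    (hlow : z / 4 ≤ a t₀ * b t₀ ^ D * β t₀)
    (hhigh : a t₀ * b t₀ ^ D * β t₀ ≤ 3 * z) :
    ∀ δ : ℝ, 0 < δ →
      ∀ t : ℝ, t₀ + (4 : ℝ) ^ ((2 * (D : ℝ) + 2) / ((D : ℝ) + 2)) *
          (D : ℝ) ^ ((D : ℝ) / ((D : ℝ) + 2)) *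
          z ^ (-(2 * (D : ℝ) + 2) / ((D : ℝ) + 2)) *
          max (Real.log ((|z - a t₀ * b t₀ ^ D * β t₀| - κ) / δ)) 0 ≤ t →
        |z - a t * b t ^ D * β t| ≤ κ + δ := by
  obtain ⟨k, rfl⟩ : ∃ k, D = k + 1 := ⟨D - 1, (Nat.succ_pred_eq_of_pos hD).symm⟩
  have hconta : ContinuousOn a (Ici 0) := fun s hs => ((hode s hs).1).continuousWithinAt
  have hcontb : ContinuousOn b (Ici 0) := fun s hs => ((hode s hs).2.1).continuousWithinAt
  have hcontβ : ContinuousOn β (Ici 0) := fun s hs => ((hode s hs).2.2).continuousWithinAt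
  -- first invariant : a² = lam + β²
  have hinv1 : ∀ s ∈ Ici (0:ℝ), a s ^ 2 = lam + β s ^ 2 := by
    intro s hs
    have hcont : ContinuousOn (fun u => a u ^ 2 - β u ^ 2) (Icc 0 s) :=
      ((hconta.mono Icc_subset_Ici_self).pow 2).sub ((hcontβ.mono Icc_subset_Ici_self).pow 2)
    have hder : ∀ x ∈ Ico (0:ℝ) s, HasDerivWithinAt (fun u => a u ^ 2 - β u ^ 2) 0 (Ici x) x := by
      intro x hx
      obtain ⟨hA, -, hC⟩ := hode x hx.1
      have hd := ((hA.pow 2).sub (hC.pow 2)).mono (Ici_subset_Ici.mpr hx.1)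
      refine hd.congr_deriv ?_
      norm_num
      ring
    have hc := constant_of_has_deriv_right_zero hcont hder s ⟨hs, le_rfl⟩
    rw [ha0, hβ0] at hc
    have h2 : Real.sqrt lam ^ 2 = lam := Real.sq_sqrt hlam.le
    norm_num at hc
    nlinarith [hc]
  -- second invariant : b² = b0² + (k+1) β²
  have hinv2 : ∀ s ∈ Ici (0:ℝ), b s ^ 2 = b0 ^ 2 + ((k:ℝ)+1) * β s ^ 2 := by
    intro s hs
    have hcont : ContinuousOn (fun u => b u ^ 2 - ((k:ℝ)+1) * a u ^ 2) (Icc 0 s) :=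
      ((hcontb.mono Icc_subset_Ici_self).pow 2).sub
        (continuousOn_const.mul ((hconta.mono Icc_subset_Ici_self).pow 2))
    have hder : ∀ x ∈ Ico (0:ℝ) s, HasDerivWithinAt
        (fun u => b u ^ 2 - ((k:ℝ)+1) * a u ^ 2) 0 (Ici x) x := by
      intro x hx
      obtain ⟨hA, hB, -⟩ := hode x hx.1
      simp only [Nat.add_sub_cancel] at hB
      have hd := ((hB.pow 2).sub ((hA.pow 2).const_mul ((k:ℝ)+1))).mono (Ici_subset_Ici.mpr hx.1)
      refine hd.congr_deriv ?_
      norm_num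
      push_cast
      ring
    have hc := constant_of_has_deriv_right_zero hcont hder s ⟨hs, le_rfl⟩
    rw [ha0, hbinit] at hc
    have h2 : Real.sqrt lam ^ 2 = lam := Real.sq_sqrt hlam.le
    have h1 := hinv1 s hs
    norm_num at hc
    nlinarith [hc]
  -- derivative of g = z - θ
  have hgderiv : ∀ x ∈ Ici (0:ℝ),
      HasDerivWithinAt (fun s => z - a s * b s ^ (k+1) * β s)
        (-((b x ^ (2*k+2) * β x ^ 2 + ((k:ℝ)+1)^2 * a x ^ 2 * b x ^ (2*k) * β x ^ 2
            + a x ^ 2 * b x ^ (2*k+2)) * ((z - a x * b x ^ (k+1) * β x) + h x))) (Ici 0) x := by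
    intro x hx
    obtain ⟨hA, hB, hC⟩ := hode x hx
    simp only [Nat.add_sub_cancel] at hB
    have hpow := hB.pow (k+1)
    have hprod := (hA.mul hpow).mul hC
    have hd := (hasDerivWithinAt_const x (Ici 0) z).sub hprod
    refine hd.congr_deriv ?_
    simp only [Nat.add_sub_cancel, Pi.pow_apply, Pi.mul_apply]
    push_cast
    ring
  -- positivity of Q
  have hQlow : ∀ x ∈ Ici (0:ℝ),
      0 < b x ^ (2*k+2) * β x ^ 2 + ((k:ℝ)+1)^2 * a x ^ 2 * b x ^ (2*k) * β x ^ 2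
          + a x ^ 2 * b x ^ (2*k+2) := by
    intro x hx
    have h1 := hinv1 x hx
    have h2 := hinv2 x hx
    have e1 : b x ^ (2*k+2) * β x ^ 2 = (b x ^ (k+1) * β x)^2 := by ring
    have e2 : ((k:ℝ)+1)^2 * a x ^ 2 * b x ^ (2*k) * β x ^ 2
        = (((k:ℝ)+1) * a x * b x ^ k * β x)^2 := by ring
    have e3 : a x ^ 2 * b x ^ (2*k+2) = (lam + β x ^ 2) * (b0^2 + ((k:ℝ)+1) * β x ^ 2)^(k+1) := by
      rw [show b x ^ (2*k+2) = (b x ^ 2)^(k+1) from by ring, h1, h2]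
    have h3 : lam * (b0^2)^(k+1) ≤ (lam + β x ^ 2) * (b0^2 + ((k:ℝ)+1) * β x ^ 2)^(k+1) := by
      refine mul_le_mul (by nlinarith [sq_nonneg (β x)])
        (pow_le_pow_left₀ (by positivity)
          (by nlinarith [mul_nonneg (by positivity : (0:ℝ) ≤ (k:ℝ)+1) (sq_nonneg (β x))]) _)
        (by positivity) (by nlinarith [sq_nonneg (β x)])
    have h4 : 0 < lam * (b0^2)^(k+1) := by positivity
    rw [e1, e2, e3]
    nlinarith [sq_nonneg (b x ^ (k+1) * β x), sq_nonneg (((k:ℝ)+1) * a x * b x ^ k * β x)]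
  -- rate bound
  have hrate : ∀ x ∈ Ici (0:ℝ), z/4 ≤ a x * b x ^ (k+1) * β x →
      (z/4) ^ ((2*((k:ℝ)+1)+2)/(((k:ℝ)+1)+2)) * ((k:ℝ)+1) ^ (((k:ℝ)+1)/(((k:ℝ)+1)+2))
        ≤ a x ^ 2 * b x ^ (2*k+2) := by
    intro x hx hθx
    have h1 := hinv1 x hx
    have h2 := hinv2 x hx
    have hun : (0:ℝ) ≤ β x ^ 2 := sq_nonneg _
    have e3 : a x ^ 2 * b x ^ (2*k+2) = (lam + β x ^ 2) * (b0^2 + ((k:ℝ)+1) * β x ^ 2)^(k+1) := by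
      rw [show b x ^ (2*k+2) = (b x ^ 2)^(k+1) from by ring, h1, h2]
    have hge : β x ^ 2 * (((k:ℝ)+1) * β x ^ 2)^(k+1) ≤ a x ^ 2 * b x ^ (2*k+2) := by
      rw [e3]
      refine mul_le_mul (by linarith)
        (pow_le_pow_left₀ (by positivity) (by nlinarith [sq_nonneg b0]) _)
        (by positivity) (by linarith)
    have hX : (0:ℝ) ≤ a x ^ 2 * b x ^ (2*k+2) := le_trans (by positivity) hge
    have hθ2 : (a x * b x ^ (k+1) * β x)^2 = (a x ^ 2 * b x ^ (2*k+2)) * β x ^ 2 := by ring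
    have hzn : (0:ℝ) ≤ z/4 := by linarith
    have hne : ((k:ℝ)+1)+2 ≠ 0 := by positivity
    have hpow : ((z/4) ^ ((2*((k:ℝ)+1)+2)/(((k:ℝ)+1)+2))
          * ((k:ℝ)+1) ^ (((k:ℝ)+1)/(((k:ℝ)+1)+2))) ^ (k+3)
        ≤ (a x ^ 2 * b x ^ (2*k+2)) ^ (k+3) := by
      have ee1 : ((2*((k:ℝ)+1)+2)/(((k:ℝ)+1)+2)) * ((k+3 : ℕ):ℝ) = ((2*k+4 : ℕ):ℝ) := by
        push_cast
        rw [div_mul_eq_mul_div, div_eq_iff hne]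
        ring
      have ee2 : ((((k:ℝ)+1))/(((k:ℝ)+1)+2)) * ((k+3 : ℕ):ℝ) = ((k+1 : ℕ):ℝ) := by
        push_cast
        rw [div_mul_eq_mul_div, div_eq_iff hne]
        ring
      have eL : ((z/4) ^ ((2*((k:ℝ)+1)+2)/(((k:ℝ)+1)+2))) ^ (k+3) = (z/4) ^ (2*k+4) := by
        rw [← Real.rpow_natCast ((z/4) ^ ((2*((k:ℝ)+1)+2)/(((k:ℝ)+1)+2))) (k+3),
            ← Real.rpow_mul hzn, ee1, Real.rpow_natCast]
      have eK : (((k:ℝ)+1) ^ (((k:ℝ)+1)/(((k:ℝ)+1)+2))) ^ (k+3) = ((k:ℝ)+1) ^ (k+1) := by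
        rw [← Real.rpow_natCast (((k:ℝ)+1) ^ (((k:ℝ)+1)/(((k:ℝ)+1)+2))) (k+3),
            ← Real.rpow_mul (by positivity), ee2, Real.rpow_natCast]
      rw [mul_pow, eL, eK]
      have s1 : (z/4)^(2*k+4) ≤ (a x * b x ^ (k+1) * β x)^(2*k+4) := pow_le_pow_left₀ hzn hθx _
      have s2 : (a x * b x ^ (k+1) * β x)^(2*k+4) * ((k:ℝ)+1)^(k+1)
          = (a x ^ 2 * b x ^ (2*k+2))^(k+2) * (β x ^ 2 * (((k:ℝ)+1) * β x ^ 2)^(k+1)) := by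
        have m1 : (((k:ℝ)+1) * β x ^ 2)^(k+1) = ((k:ℝ)+1)^(k+1) * (β x ^ 2)^(k+1) :=
          mul_pow _ _ _
        have m2 : ((a x ^ 2 * b x ^ (2*k+2)) * β x ^ 2)^(k+2)
            = (a x ^ 2 * b x ^ (2*k+2))^(k+2) * (β x ^ 2)^(k+2) := mul_pow _ _ _
        rw [show 2*k+4 = 2*(k+2) from by ring, pow_mul, hθ2, m2, m1]
        ring
      have s3 : (a x ^ 2 * b x ^ (2*k+2))^(k+2) * (β x ^ 2 * (((k:ℝ)+1) * β x ^ 2)^(k+1))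
          ≤ (a x ^ 2 * b x ^ (2*k+2))^(k+2) * (a x ^ 2 * b x ^ (2*k+2)) :=
        mul_le_mul_of_nonneg_left hge (pow_nonneg hX _)
      calc (z/4)^(2*k+4) * ((k:ℝ)+1)^(k+1)
          ≤ (a x * b x ^ (k+1) * β x)^(2*k+4) * ((k:ℝ)+1)^(k+1) :=
            mul_le_mul_of_nonneg_right s1 (by positivity)
        _ = (a x ^ 2 * b x ^ (2*k+2))^(k+2) * (β x ^ 2 * (((k:ℝ)+1) * β x ^ 2)^(k+1)) := s2
        _ ≤ (a x ^ 2 * b x ^ (2*k+2))^(k+2) * (a x ^ 2 * b x ^ (2*k+2)) := s3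
        _ = (a x ^ 2 * b x ^ (2*k+2)) ^ (k+3) := by ring
    exact le_of_pow_le_pow_left₀ (by omega) hX hpow

  -- abbreviations
  set M₀ : ℝ := max (|z - a t₀ * b t₀ ^ (k+1) * β t₀|) κ with hM₀def
  set rr : ℝ := (z/4) ^ ((2*((k:ℝ)+1)+2)/(((k:ℝ)+1)+2))
      * ((k:ℝ)+1) ^ (((k:ℝ)+1)/(((k:ℝ)+1)+2)) with hrr
  have hrr0 : 0 ≤ rr := by
    rw [hrr]
    exact mul_nonneg (Real.rpow_nonneg (by linarith) _) (Real.rpow_nonneg (by positivity) _)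
  have hMκ : κ ≤ M₀ := le_max_right _ _
  have hsubIcc : ∀ s : ℝ, Icc t₀ s ⊆ Ici (0:ℝ) := fun s y hy => le_trans ht₀ hy.1
  have hgcont : ∀ s : ℝ, ContinuousOn (fun u => z - a u * b u ^ (k+1) * β u) (Icc t₀ s) :=
    fun s y hy => ((hgderiv y (hsubIcc s hy)).continuousWithinAt).mono (hsubIcc s)
  have hgd' : ∀ s : ℝ, ∀ x ∈ Ico t₀ s,
      HasDerivWithinAt (fun u => z - a u * b u ^ (k+1) * β u)
      ((fun y => -((b y ^ (2*k+2) * β y ^ 2 + ((k:ℝ)+1)^2 * a y ^ 2 * b y ^ (2*k) * β y ^ 2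
            + a y ^ 2 * b y ^ (2*k+2)) * ((z - a y * b y ^ (k+1) * β y) + h y))) x)
      (Ici x) x := by
    intro s x hx
    exact (hgderiv x (mem_Ici.mpr (le_trans ht₀ hx.1))).mono
      (Ici_subset_Ici.mpr (le_trans ht₀ hx.1))
  -- the trap
  have htrap : ∀ s, t₀ ≤ s →
      z - a s * b s ^ (k+1) * β s ≤ max (z - a t₀ * b t₀ ^ (k+1) * β t₀) κ := by
    intro s hs
    refine le_of_forall_pos_le_add fun ε hε => ?_
    have hbar := barrier_aux
      (fun y => -((b y ^ (2*k+2) * β y ^ 2 + ((k:ℝ)+1)^2 * a y ^ 2 * b y ^ (2*k) * β y ^ 2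
            + a y ^ 2 * b y ^ (2*k+2)) * ((z - a y * b y ^ (k+1) * β y) + h y)))
      (M := max (z - a t₀ * b t₀ ^ (k+1) * β t₀) κ) (κ := κ) (r := 0) (ε := ε)
      (hgcont s) (hgd' s)
      (by have := le_max_left (z - a t₀ * b t₀ ^ (k+1) * β t₀) κ; linarith)
      ?_ hs
    · simp only [zero_mul, neg_zero, Real.exp_zero, mul_one] at hbar
      linarith
    · intro x hx hcx
      simp only [zero_mul, neg_zero, Real.exp_zero, mul_one] at hcx
      simp only [neg_zero, zero_mul, mul_zero]
      have hQ := hQlow x (mem_Ici.mpr (le_trans ht₀ hx.1))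
      have hhx := abs_le.mp (hhb x hx.1)
      have hM := le_max_right (z - a t₀ * b t₀ ^ (k+1) * β t₀) κ
      have hpos : 0 < (z - a x * b x ^ (k+1) * β x) + h x := by linarith
      linarith [mul_pos hQ hpos]
  -- upper barrier
  have hub : ∀ s, t₀ ≤ s → ∀ ε, 0 < ε →
      z - a s * b s ^ (k+1) * β s ≤
        (M₀ - κ) * Real.exp (-(rr * (s - t₀))) + (κ + ε) := by
    intro s hs ε hε
    refine barrier_aux
      (fun y => -((b y ^ (2*k+2) * β y ^ 2 + ((k:ℝ)+1)^2 * a y ^ 2 * b y ^ (2*k) * β y ^ 2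
            + a y ^ 2 * b y ^ (2*k+2)) * ((z - a y * b y ^ (k+1) * β y) + h y)))
      (t₀ := t₀) (T := s) (M := M₀) (κ := κ) (r := rr) (ε := ε)
      (hgcont s) (hgd' s)
      (by have := le_abs_self (z - a t₀ * b t₀ ^ (k+1) * β t₀)
          have := le_max_left (|z - a t₀ * b t₀ ^ (k+1) * β t₀|) κ
          rw [hM₀def]; linarith)
      ?_ hs
    intro x hx hcx
    have hx0 : x ∈ Ici (0:ℝ) := mem_Ici.mpr (le_trans ht₀ hx.1)
    have hE : 0 < Real.exp (-(rr * (x - t₀))) := Real.exp_pos _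
    have hQ := hQlow x hx0
    have hhx := abs_le.mp (hhb x hx.1)
    have hME : 0 ≤ (M₀ - κ) * Real.exp (-(rr * (x - t₀))) :=
      mul_nonneg (by linarith) hE.le
    rcases eq_or_lt_of_le hMκ with hMeq | hMlt
    · have hM0 : M₀ - κ = 0 := by rw [← hMeq]; ring
      rw [hM0, zero_mul, zero_add] at hcx
      rw [hM0, zero_mul]
      have hpos : 0 < (z - a x * b x ^ (k+1) * β x) + h x := by linarith
      linarith [mul_pos hQ hpos]
    · have hgx_gt : κ < z - a x * b x ^ (k+1) * β x := by
        nlinarith [mul_pos (show (0:ℝ) < M₀ - κ by linarith) hE]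
      have htr := htrap x hx.1
      have hgt0 : z - a x * b x ^ (k+1) * β x ≤ z - a t₀ * b t₀ ^ (k+1) * β t₀ := by
        rcases max_cases (z - a t₀ * b t₀ ^ (k+1) * β t₀) κ with ⟨hm, -⟩ | ⟨hm, -⟩
        · rw [hm] at htr; exact htr
        · rw [hm] at htr; linarith
      have hθx : z/4 ≤ a x * b x ^ (k+1) * β x := by linarith
      have t1 : (0:ℝ) ≤ b x ^ (2*k+2) * β x ^ 2 := by
        have e : b x ^ (2*k+2) * β x ^ 2 = (b x ^ (k+1) * β x)^2 := by ring
        rw [e]; positivity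
      have t2 : (0:ℝ) ≤ ((k:ℝ)+1)^2 * a x ^ 2 * b x ^ (2*k) * β x ^ 2 := by
        have e : ((k:ℝ)+1)^2 * a x ^ 2 * b x ^ (2*k) * β x ^ 2
            = (((k:ℝ)+1) * a x * b x ^ k * β x)^2 := by ring
        rw [e]; positivity
      have hQr : rr ≤ b x ^ (2*k+2) * β x ^ 2 + ((k:ℝ)+1)^2 * a x ^ 2 * b x ^ (2*k) * β x ^ 2
          + a x ^ 2 * b x ^ (2*k+2) := by
        have := hrate x hx0 hθx
        linarith
      have hgh : (M₀ - κ) * Real.exp (-(rr * (x - t₀))) + ε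
          ≤ (z - a x * b x ^ (k+1) * β x) + h x := by linarith
      have c3 := mul_le_mul_of_nonneg_left hgh hQ.le
      have c1 := mul_le_mul_of_nonneg_right hQr hME
      have c2 := mul_pos hQ hε
      nlinarith [c1, c3, c2]
  -- lower barrier
  have hlb : ∀ s, t₀ ≤ s → ∀ ε, 0 < ε →
      a s * b s ^ (k+1) * β s - z ≤
        (M₀ - κ) * Real.exp (-(rr * (s - t₀))) + (κ + ε) := by
    intro s hs ε hε
    refine barrier_aux
      (f := fun u => a u * b u ^ (k+1) * β u - z)
      (fun y => ((b y ^ (2*k+2) * β y ^ 2 + ((k:ℝ)+1)^2 * a y ^ 2 * b y ^ (2*k) * β y ^ 2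
            + a y ^ 2 * b y ^ (2*k+2)) * ((z - a y * b y ^ (k+1) * β y) + h y)))
      (t₀ := t₀) (T := s) (M := M₀) (κ := κ) (r := rr) (ε := ε)
      ?_ ?_
      (by show a t₀ * b t₀ ^ (k+1) * β t₀ - z ≤ M₀ + ε
          rw [hM₀def]
          linarith [neg_le_abs (z - a t₀ * b t₀ ^ (k+1) * β t₀),
            le_max_left (|z - a t₀ * b t₀ ^ (k+1) * β t₀|) κ])
      ?_ hs
    · intro y hy
      exact (((((hconta.mono (hsubIcc s)).mul ((hcontb.mono (hsubIcc s)).pow (k+1))).mul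
        (hcontβ.mono (hsubIcc s))).sub continuousOn_const) y hy)
    · intro x hx
      have H := ((hgderiv x (mem_Ici.mpr (le_trans ht₀ hx.1))).mono
        (Ici_subset_Ici.mpr (le_trans ht₀ hx.1))).neg
      simpa only [Pi.neg_def, neg_sub, neg_neg] using H
    · intro x hx hcx
      have hx0 : x ∈ Ici (0:ℝ) := mem_Ici.mpr (le_trans ht₀ hx.1)
      have hE : 0 < Real.exp (-(rr * (x - t₀))) := Real.exp_pos _
      have hQ := hQlow x hx0
      have hhx := abs_le.mp (hhb x hx.1)
      have hME : 0 ≤ (M₀ - κ) * Real.exp (-(rr * (x - t₀))) :=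
        mul_nonneg (by linarith) hE.le
      have hθx : z/4 ≤ a x * b x ^ (k+1) * β x := by linarith
      have hQr : rr ≤ b x ^ (2*k+2) * β x ^ 2 + ((k:ℝ)+1)^2 * a x ^ 2 * b x ^ (2*k) * β x ^ 2
          + a x ^ 2 * b x ^ (2*k+2) := by
        have t1 : (0:ℝ) ≤ b x ^ (2*k+2) * β x ^ 2 := by
          have e : b x ^ (2*k+2) * β x ^ 2 = (b x ^ (k+1) * β x)^2 := by ring
          rw [e]; positivity
        have t2 : (0:ℝ) ≤ ((k:ℝ)+1)^2 * a x ^ 2 * b x ^ (2*k) * β x ^ 2 := by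
          have e : ((k:ℝ)+1)^2 * a x ^ 2 * b x ^ (2*k) * β x ^ 2
              = (((k:ℝ)+1) * a x * b x ^ k * β x)^2 := by ring
          rw [e]; positivity
        have := hrate x hx0 hθx
        linarith
      have hgh : (z - a x * b x ^ (k+1) * β x) + h x
          ≤ -((M₀ - κ) * Real.exp (-(rr * (x - t₀)))) - ε := by linarith
      have c3 := mul_le_mul_of_nonneg_left hgh hQ.le
      have c1 := mul_le_mul_of_nonneg_right hQr hME
      have c2 := mul_pos hQ hε
      nlinarith [c1, c3, c2]
  -- combined decay bound
  have hkey : ∀ s, t₀ ≤ s →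
      |z - a s * b s ^ (k+1) * β s| ≤ (M₀ - κ) * Real.exp (-(rr * (s - t₀))) + κ := by
    intro s hs
    rw [abs_le]
    constructor
    · have h2 : a s * b s ^ (k+1) * β s - z
          ≤ (M₀ - κ) * Real.exp (-(rr * (s - t₀))) + κ :=
        le_of_forall_pos_le_add fun ε hε => by have := hlb s hs ε hε; linarith
      linarith
    · exact le_of_forall_pos_le_add fun ε hε => by have := hub s hs ε hε; linarith
  -- conclusion
  intro δ hδ t htle
  push_cast at htle
  have hc0 : 0 ≤ (4:ℝ) ^ ((2*((k:ℝ)+1)+2)/(((k:ℝ)+1)+2))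
      * ((k:ℝ)+1) ^ (((k:ℝ)+1)/(((k:ℝ)+1)+2))
      * z ^ (-(2*((k:ℝ)+1)+2)/(((k:ℝ)+1)+2)) :=
    mul_nonneg (mul_nonneg (Real.rpow_nonneg (by norm_num) _)
      (Real.rpow_nonneg (by positivity) _)) (Real.rpow_nonneg hz _)
  have hL0 : (0:ℝ) ≤ max (Real.log ((|z - a t₀ * b t₀ ^ (k+1) * β t₀| - κ)/δ)) 0 :=
    le_max_right _ _
  have htt0 : t₀ ≤ t := le_trans (by nlinarith [mul_nonneg hc0 hL0]) htle
  have hmain := hkey t htt0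
  have hexpb : (M₀ - κ) * Real.exp (-(rr * (t - t₀))) ≤ δ := by
    rcases le_or_gt (|z - a t₀ * b t₀ ^ (k+1) * β t₀|) κ with hcase | hcase
    · have hM0 : M₀ = κ := by rw [hM₀def]; exact max_eq_right hcase
      rw [hM0, sub_self, zero_mul]
      exact hδ.le
    · have hM0 : M₀ = |z - a t₀ * b t₀ ^ (k+1) * β t₀| := by
        rw [hM₀def]; exact max_eq_left hcase.le
      have h2z : |z - a t₀ * b t₀ ^ (k+1) * β t₀| ≤ 2*z :=
        abs_le.mpr ⟨by linarith, by linarith⟩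
      have hzpos : 0 < z := by linarith
      have hrpos : 0 < rr := by
        rw [hrr]
        exact mul_pos (Real.rpow_pos_of_pos (by linarith) _)
          (Real.rpow_pos_of_pos (by positivity) _)
      have hcr : 1 ≤ ((4:ℝ) ^ ((2*((k:ℝ)+1)+2)/(((k:ℝ)+1)+2))
          * ((k:ℝ)+1) ^ (((k:ℝ)+1)/(((k:ℝ)+1)+2))
          * z ^ (-(2*((k:ℝ)+1)+2)/(((k:ℝ)+1)+2))) * rr := by
        rw [hrr]
        have e1 : (z/4) ^ ((2*((k:ℝ)+1)+2)/(((k:ℝ)+1)+2))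
            = z ^ ((2*((k:ℝ)+1)+2)/(((k:ℝ)+1)+2))
              / (4:ℝ) ^ ((2*((k:ℝ)+1)+2)/(((k:ℝ)+1)+2)) :=
          Real.div_rpow hz (by norm_num) _
        have e2 : z ^ (-(2*((k:ℝ)+1)+2)/(((k:ℝ)+1)+2))
            = (z ^ ((2*((k:ℝ)+1)+2)/(((k:ℝ)+1)+2)))⁻¹ := by
          rw [show (-(2*((k:ℝ)+1)+2))/(((k:ℝ)+1)+2)
              = -((2*((k:ℝ)+1)+2)/(((k:ℝ)+1)+2)) from by ring, Real.rpow_neg hz]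
        rw [e1, e2]
        have hzp : (0:ℝ) < z ^ ((2*((k:ℝ)+1)+2)/(((k:ℝ)+1)+2)) :=
          Real.rpow_pos_of_pos hzpos _
        have h4p : (0:ℝ) < (4:ℝ) ^ ((2*((k:ℝ)+1)+2)/(((k:ℝ)+1)+2)) :=
          Real.rpow_pos_of_pos (by norm_num) _
        have hKp : (0:ℝ) < ((k:ℝ)+1) ^ (((k:ℝ)+1)/(((k:ℝ)+1)+2)) :=
          Real.rpow_pos_of_pos (by positivity) _
        have heq : ((4:ℝ) ^ ((2*((k:ℝ)+1)+2)/(((k:ℝ)+1)+2))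
              * ((k:ℝ)+1) ^ (((k:ℝ)+1)/(((k:ℝ)+1)+2))
              * (z ^ ((2*((k:ℝ)+1)+2)/(((k:ℝ)+1)+2)))⁻¹)
            * (z ^ ((2*((k:ℝ)+1)+2)/(((k:ℝ)+1)+2))
              / (4:ℝ) ^ ((2*((k:ℝ)+1)+2)/(((k:ℝ)+1)+2))
              * ((k:ℝ)+1) ^ (((k:ℝ)+1)/(((k:ℝ)+1)+2)))
            = ((k:ℝ)+1) ^ (((k:ℝ)+1)/(((k:ℝ)+1)+2))
              * ((k:ℝ)+1) ^ (((k:ℝ)+1)/(((k:ℝ)+1)+2)) := by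
          field_simp
        rw [heq, ← Real.rpow_add (by positivity : (0:ℝ) < (k:ℝ)+1)]
        calc (1:ℝ) = ((k:ℝ)+1) ^ (0:ℝ) := (Real.rpow_zero _).symm
          _ ≤ _ := Real.rpow_le_rpow_of_exponent_le
              (by linarith [Nat.cast_nonneg (α := ℝ) k]) (by positivity)
      rcases le_or_gt ((|z - a t₀ * b t₀ ^ (k+1) * β t₀| - κ)/δ) 1 with hA | hA
      · have hgk : |z - a t₀ * b t₀ ^ (k+1) * β t₀| - κ ≤ δ := by
          rw [div_le_one hδ] at hA; linarith
        have hexp1 : Real.exp (-(rr * (t - t₀))) ≤ 1 :=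
          Real.exp_le_one_iff.mpr (by nlinarith [mul_nonneg hrpos.le (sub_nonneg.mpr htt0)])
        rw [hM0]
        have : (|z - a t₀ * b t₀ ^ (k+1) * β t₀| - κ) * Real.exp (-(rr * (t - t₀)))
            ≤ (|z - a t₀ * b t₀ ^ (k+1) * β t₀| - κ) * 1 :=
          mul_le_mul_of_nonneg_left hexp1 (by linarith)
        linarith
      · have hApos : 0 < (|z - a t₀ * b t₀ ^ (k+1) * β t₀| - κ)/δ :=
          div_pos (by linarith) hδ
        have hlogpos : 0 < Real.log ((|z - a t₀ * b t₀ ^ (k+1) * β t₀| - κ)/δ) :=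
          Real.log_pos hA
        rw [max_eq_left hlogpos.le] at htle
        have h6 : Real.log ((|z - a t₀ * b t₀ ^ (k+1) * β t₀| - κ)/δ) ≤ rr * (t - t₀) := by
          have h7 : ((4:ℝ) ^ ((2*((k:ℝ)+1)+2)/(((k:ℝ)+1)+2))
              * ((k:ℝ)+1) ^ (((k:ℝ)+1)/(((k:ℝ)+1)+2))
              * z ^ (-(2*((k:ℝ)+1)+2)/(((k:ℝ)+1)+2)))
              * Real.log ((|z - a t₀ * b t₀ ^ (k+1) * β t₀| - κ)/δ) ≤ t - t₀ := by linarith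
          nlinarith [mul_le_mul_of_nonneg_left h7 hrpos.le,
            mul_le_mul_of_nonneg_right hcr hlogpos.le]
        have h8 : Real.exp (-(rr * (t - t₀)))
            ≤ δ / (|z - a t₀ * b t₀ ^ (k+1) * β t₀| - κ) :=
          calc Real.exp (-(rr * (t - t₀)))
              ≤ Real.exp (-(Real.log ((|z - a t₀ * b t₀ ^ (k+1) * β t₀| - κ)/δ))) :=
                Real.exp_le_exp.mpr (neg_le_neg h6)
            _ = ((|z - a t₀ * b t₀ ^ (k+1) * β t₀| - κ)/δ)⁻¹ := by
                rw [Real.exp_neg, Real.exp_log hApos]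
            _ = δ / (|z - a t₀ * b t₀ ^ (k+1) * β t₀| - κ) := by rw [inv_div]
        rw [hM0]
        have h10 : (|z - a t₀ * b t₀ ^ (k+1) * β t₀| - κ)
            * (δ / (|z - a t₀ * b t₀ ^ (k+1) * β t₀| - κ)) = δ := by
          rw [mul_comm]
          exact div_mul_cancel₀ δ (ne_of_gt (by linarith))
        calc (|z - a t₀ * b t₀ ^ (k+1) * β t₀| - κ) * Real.exp (-(rr * (t - t₀)))
            ≤ (|z - a t₀ * b t₀ ^ (k+1) * β t₀| - κ)
              * (δ / (|z - a t₀ * b t₀ ^ (k+1) * β t₀| - κ)) :=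
              mul_le_mul_of_nonneg_left h8 (by linarith)
          _ = δ := h10
  linarith [hmain, hexpb]
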